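/- arXiv:2302.10061 — 5 statements merged into one kernel-verified Lean document; each statement's English description precedes it below -/
import Mathlib

section
/- Let I be an open interval and E : I × I → ℝ a quasideviation. Suppose there exist functions a, b : I × I → ℝ such that E((x+y)/2, (u+v)/2) ≤ a(u,v)·E(x,u) + b(u,v)·E(y,v) for all x, y, u, v ∈ I. Then, defining c(u,v) := (a(u,v)+b(v,u))/2, the symmetrized inequality E((x+y)/2, (u+v)/2) ≤ c(u,v)·E(x,u) + c(v,u)·E(y,v) holds for all x, y, u, v ∈ I, and moreover c(u,u) = 1/2 for all u ∈ I. -/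
/-- Symmetrization of the convexity inequality for a quasideviation: from
`E((x+y)/2,(u+v)/2) ≤ a(u,v)E(x,u) + b(u,v)E(y,v)` one gets the symmetrized inequality
with `c(u,v) := (a(u,v)+b(v,u))/2`, and `c(u,u) = 1/2`. -/
theorem stmt_2 (I : Set ℝ) (hI : IsOpen I) (hconv : Convex ℝ I)
    (E : ℝ → ℝ → ℝ)
    (hD1 : ∀ x ∈ I, ∀ u ∈ I, Real.sign (E x u) = Real.sign (x - u))
    (hD2 : ∀ x ∈ I, ContinuousOn (fun u => E x u) I)
    (hD3 : ∀ x ∈ I, ∀ y ∈ I, x < y →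
      StrictAntiOn (fun u => E x u / E y u) (Set.Ioo x y))
    (a b : ℝ → ℝ → ℝ)
    (hab : ∀ x ∈ I, ∀ y ∈ I, ∀ u ∈ I, ∀ v ∈ I,
      E ((x + y) / 2) ((u + v) / 2) ≤ a u v * E x u + b u v * E y v) :
    (∀ x ∈ I, ∀ y ∈ I, ∀ u ∈ I, ∀ v ∈ I,
      E ((x + y) / 2) ((u + v) / 2) ≤
        (a u v + b v u) / 2 * E x u + (a v u + b u v) / 2 * E y v) ∧
    (∀ u ∈ I, (a u u + b u u) / 2 = 1 / 2) := by
  constructor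
  · intro x hx y hy u hu v hv
    have h1 := hab x hx y hy u hu v hv
    have h2 := hab y hy x hx v hv u hu
    have e1 : (y + x) / 2 = (x + y) / 2 := by ring
    have e2 : (v + u) / 2 = (u + v) / 2 := by ring
    rw [e1, e2] at h2
    linarith
  · intro u hu
    obtain ⟨ε, hε, hball⟩ := Metric.isOpen_iff.1 hI u hu
    have hx1 : u + ε / 2 ∈ I := by
      apply hball
      rw [Metric.mem_ball, Real.dist_eq, abs_of_pos (by linarith : (0:ℝ) < u + ε / 2 - u)]
      linarith
    have hx2 : u - ε / 2 ∈ I := by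
      apply hball
      rw [Metric.mem_ball, Real.dist_eq, abs_of_neg (by linarith : u - ε / 2 - u < 0)]
      linarith
    have hpos : 0 < E (u + ε / 2) u := by
      have := hD1 (u + ε / 2) hx1 u hu
      rw [Real.sign_of_pos (by linarith : (0:ℝ) < u + ε / 2 - u)] at this
      rcases lt_trichotomy (E (u + ε / 2) u) 0 with h | h | h
      · rw [Real.sign_of_neg h] at this; norm_num at this
      · rw [h] at this; simp [Real.sign_zero] at this
      · exact h
    have hneg : E (u - ε / 2) u < 0 := by
      have := hD1 (u - ε / 2) hx2 u hu
      rw [Real.sign_of_neg (by linarith : u - ε / 2 - u < 0)] at this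
      rcases lt_trichotomy (E (u - ε / 2) u) 0 with h | h | h
      · exact h
      · rw [h] at this; simp [Real.sign_zero] at this
      · rw [Real.sign_of_pos h] at this; norm_num at this
    have h1 := hab (u + ε / 2) hx1 (u + ε / 2) hx1 u hu u hu
    have h2 := hab (u - ε / 2) hx2 (u - ε / 2) hx2 u hu u hu
    have e1 : (u + ε / 2 + (u + ε / 2)) / 2 = u + ε / 2 := by ring
    have e2 : (u - ε / 2 + (u - ε / 2)) / 2 = u - ε / 2 := by ring
    have e3 : (u + u) / 2 = u := by ring
    rw [e1, e3] at h1
    rw [e2, e3] at h2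
    nlinarith [h1, h2, hpos, hneg]
end

section
/- Let I be an open interval and E : I × I → ℝ a quasideviation. Suppose there exists c : I × I → ℝ with E((x+y)/2, (u+v)/2) ≤ c(u,v)·E(x,u) + c(v,u)·E(y,v) for all x, y, u, v ∈ I. Then for each fixed u ∈ I, the function x ↦ E(x,u) is convex on I. -/
open Metric

lemma dyadic_ineq (I : Set ℝ) (hconv : Convex ℝ I) (f : ℝ → ℝ)
    (hmid : ∀ x ∈ I, ∀ y ∈ I, f ((x + y) / 2) ≤ (f x + f y) / 2) :
    ∀ n : ℕ, ∀ k : ℕ, k ≤ 2 ^ n → ∀ x ∈ I, ∀ y ∈ I,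
      f ((k / 2 ^ n : ℝ) * x + (1 - k / 2 ^ n) * y)
        ≤ (k / 2 ^ n : ℝ) * f x + (1 - k / 2 ^ n) * f y := by
  intro n
  induction n with
  | zero =>
    intro k hk x hx y hy
    interval_cases k <;> norm_num
  | succ n ih =>
    intro k hk x hx y hy
    set i := k / 2 with hi
    set j := k - i with hj
    have hij : i + j = k := by omega
    have hi2 : i ≤ 2 ^ n := by
      have : 2 ^ (n + 1) = 2 * 2 ^ n := by ring
      omega
    have hj2 : j ≤ 2 ^ n := by
      have : 2 ^ (n + 1) = 2 * 2 ^ n := by ring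
      omega
    have hmem : ∀ l : ℕ, l ≤ 2 ^ n → (l / 2 ^ n : ℝ) * x + (1 - l / 2 ^ n) * y ∈ I := by
      intro l hl
      have h0 : (0 : ℝ) ≤ l / 2 ^ n := by positivity
      have h1 : (l / 2 ^ n : ℝ) ≤ 1 := by
        rw [div_le_one (by positivity)]
        exact_mod_cast hl
      have := hconv (a := (l / 2 ^ n : ℝ)) (b := 1 - l / 2 ^ n) hx hy h0 (by linarith) (by ring)
      simpa [smul_eq_mul] using this
    have hpi := hmem i hi2
    have hpj := hmem j hj2
    have h1 := ih i hi2 x hx y hy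
    have h2 := ih j hj2 x hx y hy
    have h3 := hmid _ hpi _ hpj
    have hkc : (i : ℝ) + (j : ℝ) = (k : ℝ) := by exact_mod_cast hij
    have e1 : (((i / 2 ^ n : ℝ) * x + (1 - i / 2 ^ n) * y) +
        ((j / 2 ^ n : ℝ) * x + (1 - j / 2 ^ n) * y)) / 2
        = (k / 2 ^ (n + 1) : ℝ) * x + (1 - k / 2 ^ (n + 1)) * y := by
      rw [← hkc]
      field_simp
      ring
    rw [e1] at h3
    have e2 : (k / 2 ^ (n + 1) : ℝ) * f x + (1 - k / 2 ^ (n + 1)) * f y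
        = (((i / 2 ^ n : ℝ) * f x + (1 - i / 2 ^ n) * f y) +
          ((j / 2 ^ n : ℝ) * f x + (1 - j / 2 ^ n) * f y)) / 2 := by
      rw [← hkc]
      field_simp
      ring
    rw [e2]
    linarith

lemma bernstein_doetsch (I : Set ℝ) (hI : IsOpen I) (hconv : Convex ℝ I) (f : ℝ → ℝ)
    (hmid : ∀ x ∈ I, ∀ y ∈ I, f ((x + y) / 2) ≤ (f x + f y) / 2)
    (m : ℝ) (hm : m ∈ I) (ε : ℝ) (hε : 0 < ε) (hball : Metric.ball m ε ⊆ I)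
    (M : ℝ) (hbd : ∀ t ∈ Metric.ball m ε, f t ≤ M) :
    ConvexOn ℝ I f := by
  have hdy := dyadic_ineq I hconv f hmid
  -- simple instance: coefficient 1/2^n between a point and z
  have key : ∀ n : ℕ, ∀ w ∈ I, ∀ z ∈ I,
      f ((1 / 2 ^ n : ℝ) * w + (1 - 1 / 2 ^ n) * z)
        ≤ (1 / 2 ^ n : ℝ) * f w + (1 - 1 / 2 ^ n) * f z := by
    intro n w hw z hz
    have := hdy n 1 (Nat.one_le_two_pow) w hw z hz
    simpa using this
  -- Step 1: local upper bound near every point of I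
  have locbd : ∀ z ∈ I, ∃ δ > 0, ∃ M', Metric.ball z δ ⊆ I ∧
      ∀ t ∈ Metric.ball z δ, f t ≤ M' := by
    intro z hz
    obtain ⟨ρ, hρ, hρI⟩ := Metric.isOpen_iff.1 hI z hz
    obtain ⟨n, hn⟩ := pow_unbounded_of_one_lt (|z - m| / ρ + 1) (by norm_num : (1:ℝ) < 2)
    have h2n : (1:ℝ) < 2 ^ n := by
      have : (0:ℝ) ≤ |z - m| / ρ := by positivity
      linarith
    have h2npos : (0:ℝ) < 2 ^ n := by linarith
    have hne : (2:ℝ) ^ n - 1 ≠ 0 := by linarith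
    set y := (2 ^ n * z - m) / (2 ^ n - 1) with hy
    have hyz : y - z = (z - m) / (2 ^ n - 1) := by
      rw [hy]
      field_simp
      ring
    have hlt : |z - m| < ρ * (2 ^ n - 1) := by
      have h' : |z - m| / ρ < 2 ^ n - 1 := by linarith
      calc |z - m| = |z - m| / ρ * ρ := by field_simp
        _ < (2 ^ n - 1) * ρ := mul_lt_mul_of_pos_right h' hρ
        _ = ρ * (2 ^ n - 1) := by ring
    have hyI : y ∈ I := by
      apply hρI
      rw [Metric.mem_ball, Real.dist_eq, hyz, abs_div,
        abs_of_pos (by linarith : (0:ℝ) < 2 ^ n - 1), div_lt_iff₀ (by linarith)]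
      linarith
    refine ⟨min (ε / 2 ^ n) ρ, by positivity, max M (f y),
      fun t ht => hρI (Metric.ball_subset_ball (min_le_right _ _) ht), ?_⟩
    intro t ht
    have htε : |t - z| < ε / 2 ^ n := by
      have := lt_of_lt_of_le (Metric.mem_ball.1 ht) (min_le_left _ _)
      rwa [Real.dist_eq] at this
    set s' := 2 ^ n * t - (2 ^ n - 1) * y with hs'
    have hs'm : s' - m = 2 ^ n * (t - z) := by
      rw [hs', hy]
      field_simp
      ring
    have hs'B : s' ∈ Metric.ball m ε := by
      rw [Metric.mem_ball, Real.dist_eq, hs'm, abs_mul, abs_of_pos h2npos]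
      calc 2 ^ n * |t - z| < 2 ^ n * (ε / 2 ^ n) := (mul_lt_mul_iff_right₀ h2npos).2 htε
        _ = ε := by field_simp
    have heq : (1 / 2 ^ n : ℝ) * s' + (1 - 1 / 2 ^ n) * y = t := by
      rw [hs']
      field_simp
      ring
    have hkey := key n s' (hball hs'B) y hyI
    rw [heq] at hkey
    have h1 : (0:ℝ) < 1 / 2 ^ n := by positivity
    have h2 : (1 / 2 ^ n : ℝ) ≤ 1 := by
      rw [div_le_one h2npos]; linarith
    have hA : f s' ≤ max M (f y) := le_trans (hbd s' hs'B) (le_max_left _ _)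
    have hB : f y ≤ max M (f y) := le_max_right _ _
    calc f t ≤ (1 / 2 ^ n : ℝ) * f s' + (1 - 1 / 2 ^ n) * f y := hkey
      _ ≤ (1 / 2 ^ n : ℝ) * max M (f y) + (1 - 1 / 2 ^ n) * max M (f y) := by nlinarith
      _ = max M (f y) := by ring
  -- Step 2: continuity at every point of I
  have hcont : ∀ z ∈ I, ContinuousAt f z := by
    intro z hz
    obtain ⟨δ, hδ, M', hδI, hbd'⟩ := locbd z hz
    have hzM : f z ≤ M' := hbd' z (Metric.mem_ball_self hδ)
    have claimA : ∀ n : ℕ, ∀ t, |t - z| < δ / 2 ^ n → f t - f z ≤ (M' - f z) / 2 ^ n := by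
      intro n t ht
      have h2npos : (0:ℝ) < 2 ^ n := by positivity
      have hwB : z + 2 ^ n * (t - z) ∈ Metric.ball z δ := by
        rw [Metric.mem_ball, Real.dist_eq]
        have e : z + 2 ^ n * (t - z) - z = 2 ^ n * (t - z) := by ring
        rw [e, abs_mul, abs_of_pos h2npos]
        calc 2 ^ n * |t - z| < 2 ^ n * (δ / 2 ^ n) := (mul_lt_mul_iff_right₀ h2npos).2 ht
          _ = δ := by field_simp
      have heq : (1 / 2 ^ n : ℝ) * (z + 2 ^ n * (t - z)) + (1 - 1 / 2 ^ n) * z = t := by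
        field_simp
        ring
      have hk := key n _ (hδI hwB) z hz
      rw [heq] at hk
      have step : f t ≤ 1 / 2 ^ n * M' + (1 - 1 / 2 ^ n) * f z := by
        refine le_trans hk ?_
        have := mul_le_mul_of_nonneg_left (hbd' _ hwB) (by positivity : (0:ℝ) ≤ 1 / 2 ^ n)
        linarith
      calc f t - f z ≤ 1 / 2 ^ n * M' + (1 - 1 / 2 ^ n) * f z - f z := by linarith
        _ = (M' - f z) / 2 ^ n := by ring
    have claimB : ∀ n : ℕ, ∀ t, |t - z| < δ / 2 ^ n → f z - f t ≤ (M' - f z) / 2 ^ n := by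
      intro n t ht
      have h2n1 : (1:ℝ) ≤ 2 ^ n := one_le_pow₀ (by norm_num : (1:ℝ) ≤ 2)
      have hδn : δ / 2 ^ n ≤ δ := by
        rw [div_le_iff₀ (by positivity)]
        nlinarith
      have htI : t ∈ I := hδI (by rw [Metric.mem_ball, Real.dist_eq]; linarith)
      have ht' : |(2 * z - t) - z| < δ / 2 ^ n := by
        have e : (2 * z - t) - z = -(t - z) := by ring
        rw [e, abs_neg]; exact ht
      have ht'I : (2 * z - t) ∈ I := hδI (by
        rw [Metric.mem_ball, Real.dist_eq]
        have := lt_of_lt_of_le ht' hδn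
        linarith [abs_nonneg ((2 * z - t) - z), this])
      have hmz := hmid t htI (2 * z - t) ht'I
      rw [show (t + (2 * z - t)) / 2 = z by ring] at hmz
      have hA := claimA n (2 * z - t) ht'
      linarith
    rw [Metric.continuousAt_iff]
    intro ε' hε'
    obtain ⟨n, hn⟩ := pow_unbounded_of_one_lt ((M' - f z) / ε') (by norm_num : (1:ℝ) < 2)
    have h2npos : (0:ℝ) < 2 ^ n := by positivity
    have hlt : (M' - f z) / 2 ^ n < ε' := by
      rw [div_lt_iff₀ h2npos]
      have := (div_lt_iff₀ hε').1 hn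
      linarith
    refine ⟨δ / 2 ^ n, by positivity, fun {t} ht => ?_⟩
    rw [Real.dist_eq] at ht ⊢
    have hA := claimA n t ht
    have hB := claimB n t ht
    have habs : |f t - f z| ≤ (M' - f z) / 2 ^ n := abs_le.2 ⟨by linarith, by linarith⟩
    linarith
  -- Step 3: convexity from dyadic inequality + continuity
  refine ⟨hconv, ?_⟩
  intro x hx y hy a b ha hb hab
  have hb' : b = 1 - a := by linarith
  subst hb'
  have ha1 : a ≤ 1 := by linarith
  set q : ℕ → ℝ := fun n => (⌊2 ^ n * a⌋₊ : ℝ) / 2 ^ n with hq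
  have hqle : ∀ n, q n ≤ a := by
    intro n
    rw [hq, div_le_iff₀ (by positivity)]
    calc ((⌊2 ^ n * a⌋₊ : ℝ)) ≤ 2 ^ n * a := Nat.floor_le (by positivity)
      _ = a * 2 ^ n := by ring
  have hqge : ∀ n, a - 1 / 2 ^ n ≤ q n := by
    intro n
    have h2 : (0:ℝ) < 2 ^ n := by positivity
    rw [hq, le_div_iff₀ h2]
    have e : (a - 1 / 2 ^ n) * 2 ^ n = 2 ^ n * a - 1 := by field_simp
    rw [e]
    linarith [Nat.lt_floor_add_one (2 ^ n * a)]
  have hq0 : ∀ n, 0 ≤ q n := by intro n; rw [hq]; positivity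
  have hq1 : ∀ n, q n ≤ 1 := fun n => le_trans (hqle n) ha1
  have hqtend : Filter.Tendsto q Filter.atTop (nhds a) := by
    have h2 : Filter.Tendsto (fun n : ℕ => (1:ℝ) / 2 ^ n) Filter.atTop (nhds 0) := by
      simpa [one_div, inv_pow] using
        tendsto_pow_atTop_nhds_zero_of_lt_one (by norm_num : (0:ℝ) ≤ 1/2) (by norm_num : (1/2:ℝ) < 1)
    have h1 : Filter.Tendsto (fun n : ℕ => a - 1 / 2 ^ n) Filter.atTop (nhds a) := by
      simpa using (tendsto_const_nhds (x := a)).sub h2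
    exact tendsto_of_tendsto_of_tendsto_of_le_of_le h1 tendsto_const_nhds hqge hqle
  have hfloor_le : ∀ n : ℕ, ⌊2 ^ n * a⌋₊ ≤ 2 ^ n := by
    intro n
    have h : (2:ℝ) ^ n * a ≤ ((2 ^ n : ℕ) : ℝ) := by
      push_cast
      nlinarith [pow_pos (by norm_num : (0:ℝ) < 2) n]
    calc ⌊2 ^ n * a⌋₊ ≤ ⌊((2 ^ n : ℕ) : ℝ)⌋₊ := Nat.floor_le_floor h
      _ = 2 ^ n := Nat.floor_natCast _
  have hineq : ∀ n, f (q n * x + (1 - q n) * y) ≤ q n * f x + (1 - q n) * f y := by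
    intro n
    have := hdy n ⌊2 ^ n * a⌋₊ (hfloor_le n) x hx y hy
    simpa [hq] using this
  have hp : a * x + (1 - a) * y ∈ I := by
    have := hconv (a := a) (b := 1 - a) hx hy ha hb (by ring)
    simpa [smul_eq_mul] using this
  have hcp : ContinuousAt f (a * x + (1 - a) * y) := hcont _ hp
  have hgc : Continuous (fun t : ℝ => t * x + (1 - t) * y) :=
    (continuous_id.mul continuous_const).add ((continuous_const.sub continuous_id).mul continuous_const)
  have ht1 : Filter.Tendsto (fun n => q n * x + (1 - q n) * y) Filter.atTop
      (nhds (a * x + (1 - a) * y)) := (hgc.continuousAt.tendsto).comp hqtend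
  have hL : Filter.Tendsto (fun n => f (q n * x + (1 - q n) * y)) Filter.atTop
      (nhds (f (a * x + (1 - a) * y))) := hcp.tendsto.comp ht1
  have hgc2 : Continuous (fun t : ℝ => t * f x + (1 - t) * f y) :=
    (continuous_id.mul continuous_const).add ((continuous_const.sub continuous_id).mul continuous_const)
  have hR : Filter.Tendsto (fun n => q n * f x + (1 - q n) * f y) Filter.atTop
      (nhds (a * f x + (1 - a) * f y)) := (hgc2.continuousAt.tendsto).comp hqtend
  have := le_of_tendsto_of_tendsto' hL hR hineq
  simpa [smul_eq_mul] using this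

/-- If a quasideviation `E` satisfies the symmetrized inequality with weights `c`, then
for each fixed `u ∈ I` the function `x ↦ E(x,u)` is convex on `I`. -/
theorem stmt_3 (I : Set ℝ) (hI : IsOpen I) (hconv : Convex ℝ I)
    (E : ℝ → ℝ → ℝ)
    (hD1 : ∀ x ∈ I, ∀ u ∈ I, Real.sign (E x u) = Real.sign (x - u))
    (hD2 : ∀ x ∈ I, ContinuousOn (fun u => E x u) I)
    (hD3 : ∀ x ∈ I, ∀ y ∈ I, x < y →
      StrictAntiOn (fun u => E x u / E y u) (Set.Ioo x y))
    (c : ℝ → ℝ → ℝ)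
    (hc : ∀ x ∈ I, ∀ y ∈ I, ∀ u ∈ I, ∀ v ∈ I,
      E ((x + y) / 2) ((u + v) / 2) ≤ c u v * E x u + c v u * E y v) :
    ∀ u ∈ I, ConvexOn ℝ I (fun x => E x u) := by
  intro u hu
  obtain ⟨ε, hε, hballI⟩ := Metric.isOpen_iff.1 hI u hu
  have haI : u + ε / 2 ∈ I := hballI (by
    rw [Metric.mem_ball, Real.dist_eq, show u + ε / 2 - u = ε / 2 by ring,
      abs_of_pos (by positivity)]
    linarith)
  have hbI : u - ε / 2 ∈ I := hballI (by
    rw [Metric.mem_ball, Real.dist_eq, show u - ε / 2 - u = -(ε / 2) by ring, abs_neg,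
      abs_of_pos (by positivity)]
    linarith)
  have hpos : ∀ x ∈ I, u < x → 0 < E x u := by
    intro x hx hux
    have h := hD1 x hx u hu
    rw [Real.sign_of_pos (by linarith : (0:ℝ) < x - u)] at h
    rcases lt_trichotomy (E x u) 0 with h' | h' | h'
    · rw [Real.sign_of_neg h'] at h; norm_num at h
    · rw [h', Real.sign_zero] at h; norm_num at h
    · exact h'
  have hneg : ∀ x ∈ I, x < u → E x u < 0 := by
    intro x hx hux
    have h := hD1 x hx u hu
    rw [Real.sign_of_neg (by linarith : x - u < 0)] at h
    rcases lt_trichotomy (E x u) 0 with h' | h' | h'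
    · exact h'
    · rw [h', Real.sign_zero] at h; norm_num at h
    · rw [Real.sign_of_pos h'] at h; norm_num at h
  have h1 := hc _ haI _ haI u hu u hu
  rw [show (u + ε / 2 + (u + ε / 2)) / 2 = u + ε / 2 by ring,
    show (u + u) / 2 = u by ring] at h1
  have h2 := hc _ hbI _ hbI u hu u hu
  rw [show (u - ε / 2 + (u - ε / 2)) / 2 = u - ε / 2 by ring,
    show (u + u) / 2 = u by ring] at h2
  have hEa := hpos _ haI (by linarith)
  have hEb := hneg _ hbI (by linarith)
  have hcu : c u u = 1 / 2 := by nlinarith [h1, h2, hEa, hEb]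
  have hmid : ∀ x ∈ I, ∀ y ∈ I, E ((x + y) / 2) u ≤ (E x u + E y u) / 2 := by
    intro x hx y hy
    have h := hc x hx y hy u hu u hu
    rw [show (u + u) / 2 = u by ring, hcu] at h
    linarith
  have hsub : Metric.ball (u - ε / 2) (ε / 2) ⊆ I := by
    intro t ht
    rw [Metric.mem_ball, Real.dist_eq, abs_lt] at ht
    apply hballI
    rw [Metric.mem_ball, Real.dist_eq, abs_lt]
    constructor <;> [linarith [ht.1]; linarith [ht.2]]
  have hbd : ∀ t ∈ Metric.ball (u - ε / 2) (ε / 2), E t u ≤ 0 := by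
    intro t ht
    have htI := hsub ht
    rw [Metric.mem_ball, Real.dist_eq, abs_lt] at ht
    exact le_of_lt (hneg t htI (by linarith [ht.2]))
  exact bernstein_doetsch I hI hconv (fun x => E x u) hmid (u - ε / 2) hbI (ε / 2)
    (by positivity) hsub 0 hbd
end

section
/- Let I be an open interval and E : I × I → ℝ a quasideviation such that the normalized function E⁺(x,u) := E(x,u)/∂₁⁺E(u,u) is well-defined (i.e., the right partial derivative ∂₁⁺E(u,u) exists and is positive for all u ∈ I) and convex on I². Let α, β > 0 with α ≤ β and define E_{α,β}(x,u) := αE(x,u) for x ≤ u and βE(x,u) for x > u. Then ∂₁⁺E_{α,β}(u,u) = β∂₁⁺E(u,u) and the normalized function E⁺_{α,β}(x,u) := E_{α,β}(x,u)/∂₁⁺E_{α,β}(u,u) equals (1/β)·max(αE⁺(x,u), βE⁺(x,u)) and is convex on I². -/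
/-- If `E` is a quasideviation whose normalization `E⁺(x,u) = E(x,u)/∂₁⁺E(u,u)` is
well defined (with `∂₁⁺E(u,u) = d u > 0`) and convex on `I²`, and `0 < α ≤ β`, then for
`E_{α,β}(x,u) = αE(x,u)` (`x ≤ u`), `βE(x,u)` (`x > u`) one has
`∂₁⁺E_{α,β}(u,u) = β·∂₁⁺E(u,u)`, the normalization `E⁺_{α,β}` equals
`(1/β)·max(αE⁺, βE⁺)`, and it is convex on `I²`. -/
theorem stmt_8 (I : Set ℝ) (hI : IsOpen I) (hconv : Convex ℝ I)
    (E : ℝ → ℝ → ℝ)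
    (hD1 : ∀ x ∈ I, ∀ u ∈ I, Real.sign (E x u) = Real.sign (x - u))
    (hD2 : ∀ x ∈ I, ContinuousOn (fun u => E x u) I)
    (hD3 : ∀ x ∈ I, ∀ y ∈ I, x < y →
      StrictAntiOn (fun u => E x u / E y u) (Set.Ioo x y))
    (d : ℝ → ℝ)
    (hd : ∀ u ∈ I, HasDerivWithinAt (fun x => E x u) (d u) (Set.Ici u) u ∧ 0 < d u)
    (hEplus : ConvexOn ℝ (I ×ˢ I) (fun p : ℝ × ℝ => E p.1 p.2 / d p.2))
    (α β : ℝ) (hα : 0 < α) (hαβ : α ≤ β)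
    (Eab : ℝ → ℝ → ℝ)
    (hEab : ∀ x u : ℝ, Eab x u = if x ≤ u then α * E x u else β * E x u) :
    (∀ u ∈ I, HasDerivWithinAt (fun x => Eab x u) (β * d u) (Set.Ici u) u) ∧
    (∀ x ∈ I, ∀ u ∈ I,
      Eab x u / (β * d u) =
        (1 / β) * max (α * (E x u / d u)) (β * (E x u / d u))) ∧
    ConvexOn ℝ (I ×ˢ I) (fun p : ℝ × ℝ => Eab p.1 p.2 / (β * d p.2)) := by
  have hβ : 0 < β := lt_of_lt_of_le hα hαβ
  -- sign facts
  have hzero : ∀ u ∈ I, E u u = 0 := by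
    intro u hu
    have h := hD1 u hu u hu
    rw [sub_self, Real.sign_zero] at h
    rcases lt_trichotomy (E u u) 0 with h1 | h1 | h1
    · rw [Real.sign_of_neg h1] at h; norm_num at h
    · exact h1
    · rw [Real.sign_of_pos h1] at h; norm_num at h
  have hpos : ∀ x ∈ I, ∀ u ∈ I, u < x → 0 < E x u := by
    intro x hx u hu hlt
    have h := hD1 x hx u hu
    rw [Real.sign_of_pos (by linarith : (0:ℝ) < x - u)] at h
    rcases lt_trichotomy (E x u) 0 with h1 | h1 | h1
    · rw [Real.sign_of_neg h1] at h; norm_num at h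
    · rw [h1, Real.sign_zero] at h; norm_num at h
    · exact h1
  have hneg : ∀ x ∈ I, ∀ u ∈ I, x ≤ u → E x u ≤ 0 := by
    intro x hx u hu hle
    rcases eq_or_lt_of_le hle with rfl | hlt
    · exact le_of_eq (hzero x hx)
    · have h := hD1 x hx u hu
      rw [Real.sign_of_neg (by linarith : x - u < 0)] at h
      rcases lt_trichotomy (E x u) 0 with h1 | h1 | h1
      · exact le_of_lt h1
      · rw [h1, Real.sign_zero] at h; norm_num at h
      · rw [Real.sign_of_pos h1] at h; norm_num at h
  -- Part 1
  have part1 : ∀ u ∈ I, HasDerivWithinAt (fun x => Eab x u) (β * d u) (Set.Ici u) u := by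
    intro u hu
    have hder : HasDerivWithinAt (fun x => β * E x u) (β * d u) (Set.Ici u) u :=
      (hd u hu).1.const_mul β
    refine hder.congr (fun x hx => ?_) ?_
    · rw [hEab]
      split_ifs with h
      · have : x = u := le_antisymm h hx
        rw [this, hzero u hu]; ring
      · rfl
    · rw [hEab]; simp [hzero u hu]
  -- Part 2
  have part2 : ∀ x ∈ I, ∀ u ∈ I,
      Eab x u / (β * d u) = (1 / β) * max (α * (E x u / d u)) (β * (E x u / d u)) := by
    intro x hx u hu
    have hdu : 0 < d u := (hd u hu).2
    rw [hEab]
    split_ifs with h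
    · -- E x u ≤ 0, so α*(E/d) ≥ β*(E/d)
      have hE := hneg x hx u hu h
      have hq : E x u / d u ≤ 0 := div_nonpos_of_nonpos_of_nonneg hE (le_of_lt hdu)
      rw [max_eq_left (by nlinarith)]
      field_simp
    · have hE := hpos x hx u hu (lt_of_not_ge h)
      have hq : 0 ≤ E x u / d u := le_of_lt (div_pos hE hdu)
      rw [max_eq_right (by nlinarith)]
      field_simp
  -- Part 3
  refine ⟨part1, part2, ?_⟩
  have hs : Convex ℝ (I ×ˢ I) := hconv.prod hconv
  have h1 : ConvexOn ℝ (I ×ˢ I) (fun p : ℝ × ℝ => α * (E p.1 p.2 / d p.2)) :=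
    hEplus.smul (le_of_lt hα)
  have h2 : ConvexOn ℝ (I ×ˢ I) (fun p : ℝ × ℝ => β * (E p.1 p.2 / d p.2)) :=
    hEplus.smul (le_of_lt hβ)
  have hmax := (h1.sup h2).smul (le_of_lt (one_div_pos.2 hβ))
  refine ⟨hs, fun p hp q hq a b ha hb hab => ?_⟩
  have hp' : p.1 ∈ I ∧ p.2 ∈ I := hp
  have hq' : q.1 ∈ I ∧ q.2 ∈ I := hq
  have hm : (a • p + b • q) ∈ I ×ˢ I := hs hp hq ha hb hab
  have hm' : (a • p + b • q).1 ∈ I ∧ (a • p + b • q).2 ∈ I := hm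
  dsimp only
  rw [part2 _ hm'.1 _ hm'.2, part2 _ hp'.1 _ hp'.2, part2 _ hq'.1 _ hq'.2]
  exact hmax.2 hp hq ha hb hab
end

section
/- Let I ⊆ (0,∞) be an open interval, f : I → ℝ continuous and strictly increasing, and α, β > 0 with α ≤ β. Then the function E_{α,β} : I² → ℝ given by E_{α,β}(x,u) = α(f(x)−f(u)) for x ≤ u and β(f(x)−f(u)) for x > u is a quasideviation. -/
/-- If `I ⊆ (0,∞)` is an open interval, `f : I → ℝ` is continuous and strictly
increasing, and `0 < α ≤ β`, then `E_{α,β}(x,u) = α(f(x)−f(u))` for `x ≤ u`,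
`β(f(x)−f(u))` for `x > u`, is a quasideviation. -/
theorem stmt_10 (I : Set ℝ) (hI : IsOpen I) (hconv : Convex ℝ I)
    (hIpos : I ⊆ Set.Ioi (0 : ℝ))
    (f : ℝ → ℝ) (hf : ContinuousOn f I) (hmono : StrictMonoOn f I)
    (α β : ℝ) (hα : 0 < α) (hβ : 0 < β) (hαβ : α ≤ β)
    (Eab : ℝ → ℝ → ℝ)
    (hEab : ∀ x u : ℝ,
      Eab x u = if x ≤ u then α * (f x - f u) else β * (f x - f u)) :
    (∀ x ∈ I, ∀ u ∈ I, Real.sign (Eab x u) = Real.sign (x - u)) ∧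
    (∀ x ∈ I, ContinuousOn (fun u => Eab x u) I) ∧
    (∀ x ∈ I, ∀ y ∈ I, x < y →
      StrictAntiOn (fun u => Eab x u / Eab y u) (Set.Ioo x y)) := by
  refine ⟨?_, ?_, ?_⟩
  · intro x hx u hu
    rcases lt_trichotomy x u with h | h | h
    · have hfd : f x - f u < 0 := sub_neg.mpr (hmono hx hu h)
      rw [hEab, if_pos h.le, Real.sign_of_neg (by nlinarith),
        Real.sign_of_neg (sub_neg.mpr h)]
    · subst h
      simp [hEab, Real.sign_zero]
    · have hfd : 0 < f x - f u := sub_pos.mpr (hmono hu hx h)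
      rw [hEab, if_neg (not_le.mpr h), Real.sign_of_pos (by nlinarith),
        Real.sign_of_pos (sub_pos.mpr h)]
  · intro x hx
    have hcont : ContinuousOn (fun u => max (α * (f x - f u)) (β * (f x - f u))) I :=
      (continuousOn_const.mul (continuousOn_const.sub hf)).sup
        (continuousOn_const.mul (continuousOn_const.sub hf))
    apply hcont.congr
    intro u hu
    show Eab x u = _
    rw [hEab]
    rcases le_or_gt x u with h | h
    · rw [if_pos h]
      have hd : f x - f u ≤ 0 := by
        rcases eq_or_lt_of_le h with rfl | h'
        · simp
        · exact (sub_neg.mpr (hmono hx hu h')).le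
      exact (max_eq_left (by nlinarith)).symm
    · rw [if_neg (not_le.mpr h)]
      have hd : 0 < f x - f u := sub_pos.mpr (hmono hu hx h)
      exact (max_eq_right (by nlinarith)).symm
  · intro x hx y hy hxy u hu v hv huv
    have hsub : Set.Ioo x y ⊆ I := fun z hz =>
      hconv.ordConnected.out hx hy ⟨hz.1.le, hz.2.le⟩
    have huI := hsub hu
    have hvI := hsub hv
    have ht1 : f x < f u := hmono hx huI hu.1
    have ht2 : f u < f v := hmono huI hvI huv
    have ht3 : f v < f y := hmono hvI hy hv.2
    simp only
    rw [hEab x u, hEab x v, hEab y u, hEab y v,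
      if_pos hu.1.le, if_pos hv.1.le,
      if_neg (not_le.mpr hu.2), if_neg (not_le.mpr hv.2)]
    rw [div_lt_div_iff₀ (by nlinarith) (by nlinarith)]
    nlinarith [mul_pos (mul_pos hα hβ)
      (mul_pos (sub_pos.mpr ht2) (sub_pos.mpr (hmono hx hy hxy)))]
end

section
/- Let r < q with r, q ∈ (0,1) and q + r ≥ 1, let β_{q,r} := (q(q−1)/(r(r−1)))^{1/(q−r)}, and let 0 < a < b. Then γ_{q,r}(t) = (t^q − t^r)/(q−r) is convex on [a/b, b/a] if and only if β_{q,r} ≤ a/b. -/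
/-- For `r < q` with `q, r ∈ (0,1)`, `q + r ≥ 1`, `β_{q,r} = (q(q−1)/(r(r−1)))^{1/(q−r)}`
and `0 < a < b`, the function `γ_{q,r}(t) = (t^q − t^r)/(q−r)` is convex on `[a/b, b/a]`
if and only if `β_{q,r} ≤ a/b`. -/
theorem stmt_19 (q r a b : ℝ) (hrq : r < q) (hr : 0 < r) (hq : q < 1)
    (hsum : 1 ≤ q + r) (ha : 0 < a) (hab : a < b)
    (γ : ℝ → ℝ) (hγ : ∀ t : ℝ, 0 < t → γ t = (t ^ q - t ^ r) / (q - r)) :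
    ConvexOn ℝ (Set.Icc (a / b) (b / a)) γ ↔
      (q * (q - 1) / (r * (r - 1))) ^ (1 / (q - r)) ≤ a / b := by
  have hb : 0 < b := ha.trans hab
  have hqr : (0:ℝ) < q - r := sub_pos.mpr hrq
  have hq0 : 0 < q := hr.trans hrq
  have hr1 : r < 1 := hrq.trans hq
  have hqneg : q * (q - 1) < 0 := mul_neg_of_pos_of_neg hq0 (by linarith)
  have hrneg : r * (r - 1) < 0 := mul_neg_of_pos_of_neg hr (by linarith)
  set c : ℝ := q * (q - 1) / (r * (r - 1)) with hc_def
  have hc : 0 < c := div_pos_of_neg_of_neg hqneg hrneg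
  set β : ℝ := c ^ (1 / (q - r)) with hβ_def
  have hβ : 0 < β := Real.rpow_pos_of_pos hc _
  have hβqr : β ^ (q - r) = c := by
    rw [hβ_def, ← Real.rpow_mul hc.le, one_div, inv_mul_cancel₀ hqr.ne', Real.rpow_one]
  have hab' : 0 < a / b := div_pos ha hb
  have hba : 0 < b / a := div_pos hb ha
  have hablt : a / b < b / a := by
    rw [div_lt_div_iff₀ hb ha]
    nlinarith
  set D := Set.Icc (a / b) (b / a) with hD_def
  have hpos : ∀ x ∈ D, (0:ℝ) < x := fun x hx => lt_of_lt_of_le hab' hx.1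
  -- the functions
  set g : ℝ → ℝ := fun t => (t ^ q - t ^ r) / (q - r) with hg_def
  set g1 : ℝ → ℝ := fun t => (q * t ^ (q - 1) - r * t ^ (r - 1)) / (q - r) with hg1_def
  set g2 : ℝ → ℝ := fun t => (q * (q - 1) * t ^ (q - 2) - r * (r - 1) * t ^ (r - 2)) / (q - r)
    with hg2_def
  have hderiv1 : ∀ t : ℝ, 0 < t → HasDerivAt g (g1 t) t := by
    intro t ht
    have h1 : HasDerivAt (fun x : ℝ => x ^ q) (q * t ^ (q - 1)) t :=
      Real.hasDerivAt_rpow_const (Or.inl ht.ne')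
    have h2 : HasDerivAt (fun x : ℝ => x ^ r) (r * t ^ (r - 1)) t :=
      Real.hasDerivAt_rpow_const (Or.inl ht.ne')
    exact (h1.sub h2).div_const _
  have hderiv2 : ∀ t : ℝ, 0 < t → HasDerivAt g1 (g2 t) t := by
    intro t ht
    have h1 : HasDerivAt (fun x : ℝ => x ^ (q - 1)) ((q - 1) * t ^ (q - 1 - 1)) t :=
      Real.hasDerivAt_rpow_const (Or.inl ht.ne')
    have h2 : HasDerivAt (fun x : ℝ => x ^ (r - 1)) ((r - 1) * t ^ (r - 1 - 1)) t :=
      Real.hasDerivAt_rpow_const (Or.inl ht.ne')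
    have e1 : q - 1 - 1 = q - 2 := by ring
    have e2 : r - 1 - 1 = r - 2 := by ring
    rw [e1] at h1
    rw [e2] at h2
    have h3 := ((h1.const_mul q).sub (h2.const_mul r)).div_const (q - r)
    convert h3 using 1
    show (q * (q - 1) * t ^ (q - 2) - r * (r - 1) * t ^ (r - 2)) / (q - r) = _
    ring
    all_goals rfl
  -- key equivalence: for t > 0, 0 ≤ g2 t ↔ β ≤ 1/t
  have key : ∀ t : ℝ, 0 < t → (0 ≤ g2 t ↔ β ≤ 1 / t) := by
    intro t ht
    have htr2 : (0:ℝ) < t ^ (r - 2) := Real.rpow_pos_of_pos ht _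
    have hsplit : t ^ (q - 2) = t ^ (q - r) * t ^ (r - 2) := by
      rw [← Real.rpow_add ht]; ring_nf
    have step1 : (0 ≤ g2 t) ↔ r * (r - 1) ≤ q * (q - 1) * t ^ (q - r) := by
      simp only [hg2_def]
      rw [le_div_iff₀ hqr, zero_mul, sub_nonneg, hsplit, ← mul_assoc]
      exact mul_le_mul_iff_of_pos_right htr2
    have step2 : r * (r - 1) ≤ q * (q - 1) * t ^ (q - r) ↔ c * t ^ (q - r) ≤ 1 := by
      have hch : c * t ^ (q - r) = q * (q - 1) * t ^ (q - r) / (r * (r - 1)) := by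
        rw [hc_def]; ring
      rw [hch, div_le_one_of_neg hrneg]
    have step3 : c * t ^ (q - r) ≤ 1 ↔ β ≤ 1 / t := by
      have hmul : (β * t) ^ (q - r) = c * t ^ (q - r) := by
        rw [Real.mul_rpow hβ.le ht.le, hβqr]
      constructor
      · intro h
        have h1 : (β * t) ^ (q - r) ≤ 1 ^ (q - r) := by
          rw [Real.one_rpow, hmul]; exact h
        have h2 : β * t ≤ 1 :=
          (Real.rpow_le_rpow_iff (by positivity) (by norm_num) hqr).mp h1
        rw [le_div_iff₀ ht]; exact h2
      · intro h
        rw [le_div_iff₀ ht] at h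
        calc c * t ^ (q - r) = (β * t) ^ (q - r) := hmul.symm
          _ ≤ 1 ^ (q - r) := Real.rpow_le_rpow (by positivity) h hqr.le
          _ = 1 := Real.one_rpow _
    exact step1.trans (step2.trans step3)
  -- γ agrees with g on a neighborhood of each positive point
  have hγg : ∀ x : ℝ, 0 < x → γ =ᶠ[nhds x] g :=
    fun x hx => Filter.eventuallyEq_of_mem (Ioi_mem_nhds hx) fun t ht => hγ t ht
  constructor
  · -- convexity → β ≤ a/b
    intro hconv
    by_contra hcon
    push_neg at hcon
    -- pick the interval (c0, b/a) where g2 < 0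
    set c0 : ℝ := max (a / b) (1 / β) with hc0_def
    have hc0_lt : c0 < b / a := by
      apply max_lt hablt
      rw [div_lt_div_iff₀ hβ ha]
      rw [div_lt_iff₀ hb] at hcon
      nlinarith
    have hc0_pos : 0 < c0 := lt_of_lt_of_le hab' (le_max_left _ _)
    have hmono : MonotoneOn (deriv γ) D := by
      apply hconv.monotoneOn_deriv
      intro x hx
      exact ((hderiv1 x (hpos x hx)).congr_of_eventuallyEq (hγg x (hpos x hx))).differentiableAt
    have hderivγ : ∀ x ∈ D, deriv γ x = g1 x := by
      intro x hx
      exact ((hderiv1 x (hpos x hx)).congr_of_eventuallyEq (hγg x (hpos x hx))).deriv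
    -- g1 is strictly antitone on [c0, b/a]
    have hanti : StrictAntiOn g1 (Set.Icc c0 (b / a)) := by
      apply strictAntiOn_of_deriv_neg (convex_Icc _ _)
      · intro x hx
        have hx0 : 0 < x := lt_of_lt_of_le hc0_pos hx.1
        exact (hderiv2 x hx0).continuousAt.continuousWithinAt
      · intro x hx
        rw [interior_Icc] at hx
        have hx0 : 0 < x := hc0_pos.trans hx.1
        rw [(hderiv2 x hx0).deriv]
        by_contra hge
        push_neg at hge
        have hkey := (key x hx0).mp hge
        have hxβ : 1 / β < x := lt_of_le_of_lt (le_max_right _ _) hx.1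
        have hxβ' : 1 / x < β := by
          rw [div_lt_iff₀ hx0]
          rw [div_lt_iff₀ hβ] at hxβ
          nlinarith
        linarith
    -- contradiction with monotonicity of deriv γ
    set t1 : ℝ := (c0 + b / a) / 2 with ht1_def
    have ht1 : c0 < t1 ∧ t1 < b / a := by constructor <;> (rw [ht1_def]; linarith)
    have ht1D : t1 ∈ D := ⟨le_of_lt (lt_of_le_of_lt (le_max_left _ _) ht1.1), ht1.2.le⟩
    have hbaD : b / a ∈ D := ⟨hablt.le, le_refl _⟩
    have h1 := hmono ht1D hbaD ht1.2.le
    rw [hderivγ _ ht1D, hderivγ _ hbaD] at h1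
    have h2 := hanti ⟨ht1.1.le, ht1.2.le⟩ ⟨hc0_lt.le, le_refl _⟩ ht1.2
    linarith
  · -- β ≤ a/b → convexity
    intro hβab
    have hgconv : ConvexOn ℝ D g := by
      apply convexOn_of_deriv2_nonneg (convex_Icc _ _)
      · intro x hx
        exact (hderiv1 x (hpos x hx)).continuousAt.continuousWithinAt
      · intro x hx
        have hx0 : 0 < x := hpos x (interior_subset hx)
        exact (hderiv1 x hx0).differentiableAt.differentiableWithinAt
      · intro x hx
        have hx0 : 0 < x := hpos x (interior_subset hx)
        have heq : deriv g =ᶠ[nhds x] g1 :=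
          Filter.eventuallyEq_of_mem (Ioi_mem_nhds hx0) fun t ht => (hderiv1 t ht).deriv
        exact ((hderiv2 x hx0).differentiableAt.congr_of_eventuallyEq heq).differentiableWithinAt
      · intro x hx
        have hx0 : 0 < x := hpos x (interior_subset hx)
        have heq : deriv g =ᶠ[nhds x] g1 :=
          Filter.eventuallyEq_of_mem (Ioi_mem_nhds hx0) fun t ht => (hderiv1 t ht).deriv
        have h2 : deriv^[2] g x = g2 x := by
          show deriv (deriv g) x = g2 x
          rw [heq.deriv_eq, (hderiv2 x hx0).deriv]
        rw [h2, key x hx0]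
        simp only [hD_def, interior_Icc, Set.mem_Ioo] at hx
        calc β ≤ a / b := hβab
          _ = 1 / (b / a) := by rw [one_div_div]
          _ ≤ 1 / x := one_div_le_one_div_of_le hx0 hx.2.le
    refine ⟨hgconv.1, fun x hx y hy a' b' ha' hb' hab'' => ?_⟩
    have hxy : a' • x + b' • y ∈ D := hgconv.1 hx hy ha' hb' hab''
    rw [hγ _ (hpos _ hx), hγ _ (hpos _ hy), hγ _ (hpos _ hxy)]
    exact hgconv.2 hx hy ha' hb' hab''
end
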